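/- Let (V₀, g) be a finite-dimensional positive definite real inner product space of dimension m and let A₁, A₂ be algebraic curvature tensors on V₀. Then on V := V₀ × V₀ the multilinear map A := Re((A₁ + i·A₂)^ℂ) is an algebraic curvature tensor, and the symmetric bilinear form ⟨(x⁺,x⁻),(y⁺,y⁻)⟩ := g(x⁺,y⁺) − g(x⁻,y⁻) is nondegenerate of signature (m, m); hence M(V₀,g,A₁,A₂) := (V, ⟨·,·⟩, A) is a model. -/

import Mathlib

open TensorProduct

/-- `f : W⁴ → ℝ` is multilinear over `ℝ` in each of its four slots. -/
def IsML {W : Type*} [AddCommGroup W] [Module ℝ W] (f : W → W → W → W → ℝ) : Prop :=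
  (∀ x x' y z w, f (x + x') y z w = f x y z w + f x' y z w) ∧
  (∀ (c : ℝ) x y z w, f (c • x) y z w = c * f x y z w) ∧
  (∀ x y y' z w, f x (y + y') z w = f x y z w + f x y' z w) ∧
  (∀ (c : ℝ) x y z w, f x (c • y) z w = c * f x y z w) ∧
  (∀ x y z z' w, f x y (z + z') w = f x y z w + f x y z' w) ∧
  (∀ (c : ℝ) x y z w, f x y (c • z) w = c * f x y z w) ∧
  (∀ x y z w w', f x y z (w + w') = f x y z w + f x y z w') ∧
  (∀ (c : ℝ) x y z w, f x y z (c • w) = c * f x y z w)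

/-- The symmetries of the Riemann curvature tensor. -/
def IsCurvSym {W : Type*} [AddCommGroup W] [Module ℝ W] (f : W → W → W → W → ℝ) : Prop :=
  (∀ x y z w, f x y z w = - f y x z w) ∧
  (∀ x y z w, f x y z w = f z w x y) ∧
  (∀ x y z w, f x y z w + f y z x w + f z x y w = 0)

/-- An algebraic curvature tensor: a multilinear map with the curvature symmetries. -/
def IsACT {W : Type*} [AddCommGroup W] [Module ℝ W] (f : W → W → W → W → ℝ) : Prop :=
  IsML f ∧ IsCurvSym f

/-- The defining value of `⟨ρ x, y⟩`: the trace of `z ↦ ½𝓡(z,x)y + ½𝓡(z,y)x`,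
where `R` is the (curried) curvature operator. -/
noncomputable def ricciForm {V : Type*} [AddCommGroup V] [Module ℝ V]
    (R : V →ₗ[ℝ] V →ₗ[ℝ] V →ₗ[ℝ] V) (x y : V) : ℝ :=
  LinearMap.trace ℝ V
    (((1 : ℝ) / 2) • ((R.flip x).flip y) + ((1 : ℝ) / 2) • ((R.flip y).flip x))

/-- The Jacobi--Ricci commuting identity of Lemma 1 (3). -/
def JRComm {V : Type*} [AddCommGroup V] [Module ℝ V]
    (A : V → V → V → V → ℝ) (ρ : V →ₗ[ℝ] V) : Prop :=
  ∀ v₁ v₂ v₃ v₄ : V,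
    A (ρ v₁) v₂ v₃ v₄ = A v₁ (ρ v₂) v₃ v₄ ∧
    A v₁ (ρ v₂) v₃ v₄ = A v₁ v₂ (ρ v₃) v₄ ∧
    A v₁ v₂ (ρ v₃) v₄ = A v₁ v₂ v₃ (ρ v₄)

/-- The ℂ-valued tensor `A₁ + i·A₂`. -/
noncomputable def acx {W : Type*} [AddCommGroup W] [Module ℝ W]
    (A₁ A₂ : W → W → W → W → ℝ) (x y z w : W) : ℂ :=
  (A₁ x y z w : ℂ) + Complex.I * (A₂ x y z w : ℂ)

/-- The complex multilinear extension `(A₁ + i·A₂)^ℂ` of `A₁ + i·A₂` to the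
complexification of `W`, where `W × W` is identified with `W ⊗ ℂ` via
`(x⁺, x⁻) ↔ x⁺ + i·x⁻`. -/
noncomputable def acExt {W : Type*} [AddCommGroup W] [Module ℝ W]
    (A₁ A₂ : W → W → W → W → ℝ) (p q r s : W × W) : ℂ :=
  acx A₁ A₂ p.1 q.1 r.1 s.1
  + Complex.I * (acx A₁ A₂ p.2 q.1 r.1 s.1 + acx A₁ A₂ p.1 q.2 r.1 s.1
      + acx A₁ A₂ p.1 q.1 r.2 s.1 + acx A₁ A₂ p.1 q.1 r.1 s.2)
  - (acx A₁ A₂ p.2 q.2 r.1 s.1 + acx A₁ A₂ p.2 q.1 r.2 s.1 + acx A₁ A₂ p.2 q.1 r.1 s.2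
      + acx A₁ A₂ p.1 q.2 r.2 s.1 + acx A₁ A₂ p.1 q.2 r.1 s.2 + acx A₁ A₂ p.1 q.1 r.2 s.2)
  - Complex.I * (acx A₁ A₂ p.2 q.2 r.2 s.1 + acx A₁ A₂ p.2 q.2 r.1 s.2
      + acx A₁ A₂ p.2 q.1 r.2 s.2 + acx A₁ A₂ p.1 q.2 r.2 s.2)
  + acx A₁ A₂ p.2 q.2 r.2 s.2

/-- The curvature tensor `A := Re((A₁ + i·A₂)^ℂ)` of the model `M(V₀,g,A₁,A₂)`. -/
noncomputable def modelA {W : Type*} [AddCommGroup W] [Module ℝ W]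
    (A₁ A₂ : W → W → W → W → ℝ) (p q r s : W × W) : ℝ :=
  (acExt A₁ A₂ p q r s).re

/-- The inner product `⟨(x⁺,x⁻),(y⁺,y⁻)⟩ = g(x⁺,y⁺) − g(x⁻,y⁻)` of the model
`M(V₀,g,A₁,A₂)`. -/
def modelB {W : Type*} [AddCommGroup W] [Module ℝ W]
    (g : LinearMap.BilinForm ℝ W) (p q : W × W) : ℝ :=
  g p.1 q.1 - g p.2 q.2

/-- `f` is Einstein with Einstein constant `a` on the positive definite inner product
space `(W, g)`: for every `g`-orthonormal basis `{e_k}` one has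
`Σ_k f(x, e_k, e_k, y) = a·g(x,y)`. -/
def IsEinsteinWith {W : Type*} [AddCommGroup W] [Module ℝ W]
    (g : LinearMap.BilinForm ℝ W) (f : W → W → W → W → ℝ) (a : ℝ) : Prop :=
  ∀ (n : ℕ) (b : Module.Basis (Fin n) ℝ W),
    (∀ i j, g (b i) (b j) = if i = j then 1 else 0) →
    ∀ x y, (∑ k, f x (b k) (b k) y) = a * g x y

section AuxACX

variable {W : Type*} [AddCommGroup W] [Module ℝ W] {A₁ A₂ : W → W → W → W → ℝ}

lemma acx_add1 (h₁ : IsACT A₁) (h₂ : IsACT A₂) (x x' y z w : W) :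
    acx A₁ A₂ (x + x') y z w = acx A₁ A₂ x y z w + acx A₁ A₂ x' y z w := by
  simp only [acx, h₁.1.1, h₂.1.1]; push_cast; ring

lemma acx_smul1 (h₁ : IsACT A₁) (h₂ : IsACT A₂) (c : ℝ) (x y z w : W) :
    acx A₁ A₂ (c • x) y z w = (c : ℂ) * acx A₁ A₂ x y z w := by
  simp only [acx, h₁.1.2.1, h₂.1.2.1]; push_cast; ring

lemma acx_add2 (h₁ : IsACT A₁) (h₂ : IsACT A₂) (x y y' z w : W) :
    acx A₁ A₂ x (y + y') z w = acx A₁ A₂ x y z w + acx A₁ A₂ x y' z w := by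
  simp only [acx, h₁.1.2.2.1, h₂.1.2.2.1]; push_cast; ring

lemma acx_smul2 (h₁ : IsACT A₁) (h₂ : IsACT A₂) (c : ℝ) (y x z w : W) :
    acx A₁ A₂ y (c • x) z w = (c : ℂ) * acx A₁ A₂ y x z w := by
  simp only [acx, h₁.1.2.2.2.1, h₂.1.2.2.2.1]; push_cast; ring

lemma acx_add3 (h₁ : IsACT A₁) (h₂ : IsACT A₂) (x y z z' w : W) :
    acx A₁ A₂ x y (z + z') w = acx A₁ A₂ x y z w + acx A₁ A₂ x y z' w := by
  simp only [acx, h₁.1.2.2.2.2.1, h₂.1.2.2.2.2.1]; push_cast; ring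

lemma acx_smul3 (h₁ : IsACT A₁) (h₂ : IsACT A₂) (c : ℝ) (y z x w : W) :
    acx A₁ A₂ y z (c • x) w = (c : ℂ) * acx A₁ A₂ y z x w := by
  simp only [acx, h₁.1.2.2.2.2.2.1, h₂.1.2.2.2.2.2.1]; push_cast; ring

lemma acx_add4 (h₁ : IsACT A₁) (h₂ : IsACT A₂) (x y z w w' : W) :
    acx A₁ A₂ x y z (w + w') = acx A₁ A₂ x y z w + acx A₁ A₂ x y z w' := by
  simp only [acx, h₁.1.2.2.2.2.2.2.1, h₂.1.2.2.2.2.2.2.1]; push_cast; ring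

lemma acx_smul4 (h₁ : IsACT A₁) (h₂ : IsACT A₂) (c : ℝ) (y z w x : W) :
    acx A₁ A₂ y z w (c • x) = (c : ℂ) * acx A₁ A₂ y z w x := by
  simp only [acx, h₁.1.2.2.2.2.2.2.2, h₂.1.2.2.2.2.2.2.2]; push_cast; ring

lemma acx_anti (h₁ : IsACT A₁) (h₂ : IsACT A₂) (x y z w : W) :
    acx A₁ A₂ x y z w = - acx A₁ A₂ y x z w := by
  simp only [acx]; rw [h₁.2.1 x y z w, h₂.2.1 x y z w]; push_cast; ring

lemma acx_pair (h₁ : IsACT A₁) (h₂ : IsACT A₂) (x y z w : W) :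
    acx A₁ A₂ x y z w = acx A₁ A₂ z w x y := by
  simp only [acx]; rw [h₁.2.2.1 x y z w, h₂.2.2.1 x y z w]

lemma acx_bianchi (h₁ : IsACT A₁) (h₂ : IsACT A₂) (x y z w : W) :
    acx A₁ A₂ x y z w + acx A₁ A₂ y z x w + acx A₁ A₂ z x y w = 0 := by
  have f₁ : ((A₁ x y z w : ℂ)) + A₁ y z x w + A₁ z x y w = 0 := by
    exact_mod_cast h₁.2.2.2 x y z w
  have f₂ : ((A₂ x y z w : ℂ)) + A₂ y z x w + A₂ z x y w = 0 := by
    exact_mod_cast h₂.2.2.2 x y z w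
  simp only [acx]
  linear_combination f₁ + Complex.I * f₂

lemma acExt_add1 (h₁ : IsACT A₁) (h₂ : IsACT A₂) (p q r s : W × W) (p' : W × W) :
    acExt A₁ A₂ (p + p') q r s =
      acExt A₁ A₂ p q r s + acExt A₁ A₂ p' q r s := by
  simp only [acExt, Prod.fst_add, Prod.snd_add]
  linear_combination (1:ℂ) * (acx_add1 h₁ h₂ p.1 p'.1 q.1 r.1 s.1)
    + Complex.I * (acx_add1 h₁ h₂ p.2 p'.2 q.1 r.1 s.1)
    + Complex.I * (acx_add1 h₁ h₂ p.1 p'.1 q.2 r.1 s.1)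
    + Complex.I * (acx_add1 h₁ h₂ p.1 p'.1 q.1 r.2 s.1)
    + Complex.I * (acx_add1 h₁ h₂ p.1 p'.1 q.1 r.1 s.2)
    + (-1:ℂ) * (acx_add1 h₁ h₂ p.2 p'.2 q.2 r.1 s.1)
    + (-1:ℂ) * (acx_add1 h₁ h₂ p.2 p'.2 q.1 r.2 s.1)
    + (-1:ℂ) * (acx_add1 h₁ h₂ p.2 p'.2 q.1 r.1 s.2)
    + (-1:ℂ) * (acx_add1 h₁ h₂ p.1 p'.1 q.2 r.2 s.1)
    + (-1:ℂ) * (acx_add1 h₁ h₂ p.1 p'.1 q.2 r.1 s.2)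
    + (-1:ℂ) * (acx_add1 h₁ h₂ p.1 p'.1 q.1 r.2 s.2)
    + (-Complex.I) * (acx_add1 h₁ h₂ p.2 p'.2 q.2 r.2 s.1)
    + (-Complex.I) * (acx_add1 h₁ h₂ p.2 p'.2 q.2 r.1 s.2)
    + (-Complex.I) * (acx_add1 h₁ h₂ p.2 p'.2 q.1 r.2 s.2)
    + (-Complex.I) * (acx_add1 h₁ h₂ p.1 p'.1 q.2 r.2 s.2)
    + (1:ℂ) * (acx_add1 h₁ h₂ p.2 p'.2 q.2 r.2 s.2)

lemma acExt_smul1 (h₁ : IsACT A₁) (h₂ : IsACT A₂) (c : ℝ) (p q r s : W × W) :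
    acExt A₁ A₂ (c • p) q r s = (c : ℂ) * acExt A₁ A₂ p q r s := by
  simp only [acExt, Prod.smul_fst, Prod.smul_snd]
  linear_combination (1:ℂ) * (acx_smul1 h₁ h₂ c p.1 q.1 r.1 s.1)
    + Complex.I * (acx_smul1 h₁ h₂ c p.2 q.1 r.1 s.1)
    + Complex.I * (acx_smul1 h₁ h₂ c p.1 q.2 r.1 s.1)
    + Complex.I * (acx_smul1 h₁ h₂ c p.1 q.1 r.2 s.1)
    + Complex.I * (acx_smul1 h₁ h₂ c p.1 q.1 r.1 s.2)
    + (-1:ℂ) * (acx_smul1 h₁ h₂ c p.2 q.2 r.1 s.1)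
    + (-1:ℂ) * (acx_smul1 h₁ h₂ c p.2 q.1 r.2 s.1)
    + (-1:ℂ) * (acx_smul1 h₁ h₂ c p.2 q.1 r.1 s.2)
    + (-1:ℂ) * (acx_smul1 h₁ h₂ c p.1 q.2 r.2 s.1)
    + (-1:ℂ) * (acx_smul1 h₁ h₂ c p.1 q.2 r.1 s.2)
    + (-1:ℂ) * (acx_smul1 h₁ h₂ c p.1 q.1 r.2 s.2)
    + (-Complex.I) * (acx_smul1 h₁ h₂ c p.2 q.2 r.2 s.1)
    + (-Complex.I) * (acx_smul1 h₁ h₂ c p.2 q.2 r.1 s.2)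
    + (-Complex.I) * (acx_smul1 h₁ h₂ c p.2 q.1 r.2 s.2)
    + (-Complex.I) * (acx_smul1 h₁ h₂ c p.1 q.2 r.2 s.2)
    + (1:ℂ) * (acx_smul1 h₁ h₂ c p.2 q.2 r.2 s.2)

lemma acExt_add2 (h₁ : IsACT A₁) (h₂ : IsACT A₂) (p q r s : W × W) (q' : W × W) :
    acExt A₁ A₂ p (q + q') r s =
      acExt A₁ A₂ p q r s + acExt A₁ A₂ p q' r s := by
  simp only [acExt, Prod.fst_add, Prod.snd_add]
  linear_combination (1:ℂ) * (acx_add2 h₁ h₂ p.1 q.1 q'.1 r.1 s.1)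
    + Complex.I * (acx_add2 h₁ h₂ p.2 q.1 q'.1 r.1 s.1)
    + Complex.I * (acx_add2 h₁ h₂ p.1 q.2 q'.2 r.1 s.1)
    + Complex.I * (acx_add2 h₁ h₂ p.1 q.1 q'.1 r.2 s.1)
    + Complex.I * (acx_add2 h₁ h₂ p.1 q.1 q'.1 r.1 s.2)
    + (-1:ℂ) * (acx_add2 h₁ h₂ p.2 q.2 q'.2 r.1 s.1)
    + (-1:ℂ) * (acx_add2 h₁ h₂ p.2 q.1 q'.1 r.2 s.1)
    + (-1:ℂ) * (acx_add2 h₁ h₂ p.2 q.1 q'.1 r.1 s.2)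
    + (-1:ℂ) * (acx_add2 h₁ h₂ p.1 q.2 q'.2 r.2 s.1)
    + (-1:ℂ) * (acx_add2 h₁ h₂ p.1 q.2 q'.2 r.1 s.2)
    + (-1:ℂ) * (acx_add2 h₁ h₂ p.1 q.1 q'.1 r.2 s.2)
    + (-Complex.I) * (acx_add2 h₁ h₂ p.2 q.2 q'.2 r.2 s.1)
    + (-Complex.I) * (acx_add2 h₁ h₂ p.2 q.2 q'.2 r.1 s.2)
    + (-Complex.I) * (acx_add2 h₁ h₂ p.2 q.1 q'.1 r.2 s.2)
    + (-Complex.I) * (acx_add2 h₁ h₂ p.1 q.2 q'.2 r.2 s.2)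
    + (1:ℂ) * (acx_add2 h₁ h₂ p.2 q.2 q'.2 r.2 s.2)

lemma acExt_smul2 (h₁ : IsACT A₁) (h₂ : IsACT A₂) (c : ℝ) (p q r s : W × W) :
    acExt A₁ A₂ p (c • q) r s = (c : ℂ) * acExt A₁ A₂ p q r s := by
  simp only [acExt, Prod.smul_fst, Prod.smul_snd]
  linear_combination (1:ℂ) * (acx_smul2 h₁ h₂ c p.1 q.1 r.1 s.1)
    + Complex.I * (acx_smul2 h₁ h₂ c p.2 q.1 r.1 s.1)
    + Complex.I * (acx_smul2 h₁ h₂ c p.1 q.2 r.1 s.1)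
    + Complex.I * (acx_smul2 h₁ h₂ c p.1 q.1 r.2 s.1)
    + Complex.I * (acx_smul2 h₁ h₂ c p.1 q.1 r.1 s.2)
    + (-1:ℂ) * (acx_smul2 h₁ h₂ c p.2 q.2 r.1 s.1)
    + (-1:ℂ) * (acx_smul2 h₁ h₂ c p.2 q.1 r.2 s.1)
    + (-1:ℂ) * (acx_smul2 h₁ h₂ c p.2 q.1 r.1 s.2)
    + (-1:ℂ) * (acx_smul2 h₁ h₂ c p.1 q.2 r.2 s.1)
    + (-1:ℂ) * (acx_smul2 h₁ h₂ c p.1 q.2 r.1 s.2)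
    + (-1:ℂ) * (acx_smul2 h₁ h₂ c p.1 q.1 r.2 s.2)
    + (-Complex.I) * (acx_smul2 h₁ h₂ c p.2 q.2 r.2 s.1)
    + (-Complex.I) * (acx_smul2 h₁ h₂ c p.2 q.2 r.1 s.2)
    + (-Complex.I) * (acx_smul2 h₁ h₂ c p.2 q.1 r.2 s.2)
    + (-Complex.I) * (acx_smul2 h₁ h₂ c p.1 q.2 r.2 s.2)
    + (1:ℂ) * (acx_smul2 h₁ h₂ c p.2 q.2 r.2 s.2)

lemma acExt_add3 (h₁ : IsACT A₁) (h₂ : IsACT A₂) (p q r s : W × W) (r' : W × W) :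
    acExt A₁ A₂ p q (r + r') s =
      acExt A₁ A₂ p q r s + acExt A₁ A₂ p q r' s := by
  simp only [acExt, Prod.fst_add, Prod.snd_add]
  linear_combination (1:ℂ) * (acx_add3 h₁ h₂ p.1 q.1 r.1 r'.1 s.1)
    + Complex.I * (acx_add3 h₁ h₂ p.2 q.1 r.1 r'.1 s.1)
    + Complex.I * (acx_add3 h₁ h₂ p.1 q.2 r.1 r'.1 s.1)
    + Complex.I * (acx_add3 h₁ h₂ p.1 q.1 r.2 r'.2 s.1)
    + Complex.I * (acx_add3 h₁ h₂ p.1 q.1 r.1 r'.1 s.2)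
    + (-1:ℂ) * (acx_add3 h₁ h₂ p.2 q.2 r.1 r'.1 s.1)
    + (-1:ℂ) * (acx_add3 h₁ h₂ p.2 q.1 r.2 r'.2 s.1)
    + (-1:ℂ) * (acx_add3 h₁ h₂ p.2 q.1 r.1 r'.1 s.2)
    + (-1:ℂ) * (acx_add3 h₁ h₂ p.1 q.2 r.2 r'.2 s.1)
    + (-1:ℂ) * (acx_add3 h₁ h₂ p.1 q.2 r.1 r'.1 s.2)
    + (-1:ℂ) * (acx_add3 h₁ h₂ p.1 q.1 r.2 r'.2 s.2)
    + (-Complex.I) * (acx_add3 h₁ h₂ p.2 q.2 r.2 r'.2 s.1)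
    + (-Complex.I) * (acx_add3 h₁ h₂ p.2 q.2 r.1 r'.1 s.2)
    + (-Complex.I) * (acx_add3 h₁ h₂ p.2 q.1 r.2 r'.2 s.2)
    + (-Complex.I) * (acx_add3 h₁ h₂ p.1 q.2 r.2 r'.2 s.2)
    + (1:ℂ) * (acx_add3 h₁ h₂ p.2 q.2 r.2 r'.2 s.2)

lemma acExt_smul3 (h₁ : IsACT A₁) (h₂ : IsACT A₂) (c : ℝ) (p q r s : W × W) :
    acExt A₁ A₂ p q (c • r) s = (c : ℂ) * acExt A₁ A₂ p q r s := by
  simp only [acExt, Prod.smul_fst, Prod.smul_snd]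
  linear_combination (1:ℂ) * (acx_smul3 h₁ h₂ c p.1 q.1 r.1 s.1)
    + Complex.I * (acx_smul3 h₁ h₂ c p.2 q.1 r.1 s.1)
    + Complex.I * (acx_smul3 h₁ h₂ c p.1 q.2 r.1 s.1)
    + Complex.I * (acx_smul3 h₁ h₂ c p.1 q.1 r.2 s.1)
    + Complex.I * (acx_smul3 h₁ h₂ c p.1 q.1 r.1 s.2)
    + (-1:ℂ) * (acx_smul3 h₁ h₂ c p.2 q.2 r.1 s.1)
    + (-1:ℂ) * (acx_smul3 h₁ h₂ c p.2 q.1 r.2 s.1)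
    + (-1:ℂ) * (acx_smul3 h₁ h₂ c p.2 q.1 r.1 s.2)
    + (-1:ℂ) * (acx_smul3 h₁ h₂ c p.1 q.2 r.2 s.1)
    + (-1:ℂ) * (acx_smul3 h₁ h₂ c p.1 q.2 r.1 s.2)
    + (-1:ℂ) * (acx_smul3 h₁ h₂ c p.1 q.1 r.2 s.2)
    + (-Complex.I) * (acx_smul3 h₁ h₂ c p.2 q.2 r.2 s.1)
    + (-Complex.I) * (acx_smul3 h₁ h₂ c p.2 q.2 r.1 s.2)
    + (-Complex.I) * (acx_smul3 h₁ h₂ c p.2 q.1 r.2 s.2)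
    + (-Complex.I) * (acx_smul3 h₁ h₂ c p.1 q.2 r.2 s.2)
    + (1:ℂ) * (acx_smul3 h₁ h₂ c p.2 q.2 r.2 s.2)

lemma acExt_add4 (h₁ : IsACT A₁) (h₂ : IsACT A₂) (p q r s : W × W) (s' : W × W) :
    acExt A₁ A₂ p q r (s + s') =
      acExt A₁ A₂ p q r s + acExt A₁ A₂ p q r s' := by
  simp only [acExt, Prod.fst_add, Prod.snd_add]
  linear_combination (1:ℂ) * (acx_add4 h₁ h₂ p.1 q.1 r.1 s.1 s'.1)
    + Complex.I * (acx_add4 h₁ h₂ p.2 q.1 r.1 s.1 s'.1)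
    + Complex.I * (acx_add4 h₁ h₂ p.1 q.2 r.1 s.1 s'.1)
    + Complex.I * (acx_add4 h₁ h₂ p.1 q.1 r.2 s.1 s'.1)
    + Complex.I * (acx_add4 h₁ h₂ p.1 q.1 r.1 s.2 s'.2)
    + (-1:ℂ) * (acx_add4 h₁ h₂ p.2 q.2 r.1 s.1 s'.1)
    + (-1:ℂ) * (acx_add4 h₁ h₂ p.2 q.1 r.2 s.1 s'.1)
    + (-1:ℂ) * (acx_add4 h₁ h₂ p.2 q.1 r.1 s.2 s'.2)
    + (-1:ℂ) * (acx_add4 h₁ h₂ p.1 q.2 r.2 s.1 s'.1)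
    + (-1:ℂ) * (acx_add4 h₁ h₂ p.1 q.2 r.1 s.2 s'.2)
    + (-1:ℂ) * (acx_add4 h₁ h₂ p.1 q.1 r.2 s.2 s'.2)
    + (-Complex.I) * (acx_add4 h₁ h₂ p.2 q.2 r.2 s.1 s'.1)
    + (-Complex.I) * (acx_add4 h₁ h₂ p.2 q.2 r.1 s.2 s'.2)
    + (-Complex.I) * (acx_add4 h₁ h₂ p.2 q.1 r.2 s.2 s'.2)
    + (-Complex.I) * (acx_add4 h₁ h₂ p.1 q.2 r.2 s.2 s'.2)
    + (1:ℂ) * (acx_add4 h₁ h₂ p.2 q.2 r.2 s.2 s'.2)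

lemma acExt_smul4 (h₁ : IsACT A₁) (h₂ : IsACT A₂) (c : ℝ) (p q r s : W × W) :
    acExt A₁ A₂ p q r (c • s) = (c : ℂ) * acExt A₁ A₂ p q r s := by
  simp only [acExt, Prod.smul_fst, Prod.smul_snd]
  linear_combination (1:ℂ) * (acx_smul4 h₁ h₂ c p.1 q.1 r.1 s.1)
    + Complex.I * (acx_smul4 h₁ h₂ c p.2 q.1 r.1 s.1)
    + Complex.I * (acx_smul4 h₁ h₂ c p.1 q.2 r.1 s.1)
    + Complex.I * (acx_smul4 h₁ h₂ c p.1 q.1 r.2 s.1)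
    + Complex.I * (acx_smul4 h₁ h₂ c p.1 q.1 r.1 s.2)
    + (-1:ℂ) * (acx_smul4 h₁ h₂ c p.2 q.2 r.1 s.1)
    + (-1:ℂ) * (acx_smul4 h₁ h₂ c p.2 q.1 r.2 s.1)
    + (-1:ℂ) * (acx_smul4 h₁ h₂ c p.2 q.1 r.1 s.2)
    + (-1:ℂ) * (acx_smul4 h₁ h₂ c p.1 q.2 r.2 s.1)
    + (-1:ℂ) * (acx_smul4 h₁ h₂ c p.1 q.2 r.1 s.2)
    + (-1:ℂ) * (acx_smul4 h₁ h₂ c p.1 q.1 r.2 s.2)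
    + (-Complex.I) * (acx_smul4 h₁ h₂ c p.2 q.2 r.2 s.1)
    + (-Complex.I) * (acx_smul4 h₁ h₂ c p.2 q.2 r.1 s.2)
    + (-Complex.I) * (acx_smul4 h₁ h₂ c p.2 q.1 r.2 s.2)
    + (-Complex.I) * (acx_smul4 h₁ h₂ c p.1 q.2 r.2 s.2)
    + (1:ℂ) * (acx_smul4 h₁ h₂ c p.2 q.2 r.2 s.2)

lemma acExt_anti (h₁ : IsACT A₁) (h₂ : IsACT A₂) (p q r s : W × W) :
    acExt A₁ A₂ p q r s = - acExt A₁ A₂ q p r s := by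
  simp only [acExt]
  linear_combination (1:ℂ) * (acx_anti h₁ h₂ p.1 q.1 r.1 s.1)
    + Complex.I * (acx_anti h₁ h₂ p.2 q.1 r.1 s.1)
    + Complex.I * (acx_anti h₁ h₂ p.1 q.2 r.1 s.1)
    + Complex.I * (acx_anti h₁ h₂ p.1 q.1 r.2 s.1)
    + Complex.I * (acx_anti h₁ h₂ p.1 q.1 r.1 s.2)
    + (-1:ℂ) * (acx_anti h₁ h₂ p.2 q.2 r.1 s.1)
    + (-1:ℂ) * (acx_anti h₁ h₂ p.2 q.1 r.2 s.1)
    + (-1:ℂ) * (acx_anti h₁ h₂ p.2 q.1 r.1 s.2)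
    + (-1:ℂ) * (acx_anti h₁ h₂ p.1 q.2 r.2 s.1)
    + (-1:ℂ) * (acx_anti h₁ h₂ p.1 q.2 r.1 s.2)
    + (-1:ℂ) * (acx_anti h₁ h₂ p.1 q.1 r.2 s.2)
    + (-Complex.I) * (acx_anti h₁ h₂ p.2 q.2 r.2 s.1)
    + (-Complex.I) * (acx_anti h₁ h₂ p.2 q.2 r.1 s.2)
    + (-Complex.I) * (acx_anti h₁ h₂ p.2 q.1 r.2 s.2)
    + (-Complex.I) * (acx_anti h₁ h₂ p.1 q.2 r.2 s.2)
    + (1:ℂ) * (acx_anti h₁ h₂ p.2 q.2 r.2 s.2)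

lemma acExt_pair (h₁ : IsACT A₁) (h₂ : IsACT A₂) (p q r s : W × W) :
    acExt A₁ A₂ p q r s = acExt A₁ A₂ r s p q := by
  simp only [acExt]
  linear_combination (1:ℂ) * (acx_pair h₁ h₂ p.1 q.1 r.1 s.1)
    + Complex.I * (acx_pair h₁ h₂ p.2 q.1 r.1 s.1)
    + Complex.I * (acx_pair h₁ h₂ p.1 q.2 r.1 s.1)
    + Complex.I * (acx_pair h₁ h₂ p.1 q.1 r.2 s.1)
    + Complex.I * (acx_pair h₁ h₂ p.1 q.1 r.1 s.2)
    + (-1:ℂ) * (acx_pair h₁ h₂ p.2 q.2 r.1 s.1)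
    + (-1:ℂ) * (acx_pair h₁ h₂ p.2 q.1 r.2 s.1)
    + (-1:ℂ) * (acx_pair h₁ h₂ p.2 q.1 r.1 s.2)
    + (-1:ℂ) * (acx_pair h₁ h₂ p.1 q.2 r.2 s.1)
    + (-1:ℂ) * (acx_pair h₁ h₂ p.1 q.2 r.1 s.2)
    + (-1:ℂ) * (acx_pair h₁ h₂ p.1 q.1 r.2 s.2)
    + (-Complex.I) * (acx_pair h₁ h₂ p.2 q.2 r.2 s.1)
    + (-Complex.I) * (acx_pair h₁ h₂ p.2 q.2 r.1 s.2)
    + (-Complex.I) * (acx_pair h₁ h₂ p.2 q.1 r.2 s.2)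
    + (-Complex.I) * (acx_pair h₁ h₂ p.1 q.2 r.2 s.2)
    + (1:ℂ) * (acx_pair h₁ h₂ p.2 q.2 r.2 s.2)

lemma acExt_bianchi (h₁ : IsACT A₁) (h₂ : IsACT A₂) (p q r s : W × W) :
    acExt A₁ A₂ p q r s + acExt A₁ A₂ q r p s + acExt A₁ A₂ r p q s = 0 := by
  simp only [acExt]
  linear_combination (1:ℂ) * (acx_bianchi h₁ h₂ p.1 q.1 r.1 s.1)
    + Complex.I * (acx_bianchi h₁ h₂ p.2 q.1 r.1 s.1)
    + Complex.I * (acx_bianchi h₁ h₂ p.1 q.2 r.1 s.1)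
    + Complex.I * (acx_bianchi h₁ h₂ p.1 q.1 r.2 s.1)
    + Complex.I * (acx_bianchi h₁ h₂ p.1 q.1 r.1 s.2)
    + (-1:ℂ) * (acx_bianchi h₁ h₂ p.2 q.2 r.1 s.1)
    + (-1:ℂ) * (acx_bianchi h₁ h₂ p.2 q.1 r.2 s.1)
    + (-1:ℂ) * (acx_bianchi h₁ h₂ p.2 q.1 r.1 s.2)
    + (-1:ℂ) * (acx_bianchi h₁ h₂ p.1 q.2 r.2 s.1)
    + (-1:ℂ) * (acx_bianchi h₁ h₂ p.1 q.2 r.1 s.2)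
    + (-1:ℂ) * (acx_bianchi h₁ h₂ p.1 q.1 r.2 s.2)
    + (-Complex.I) * (acx_bianchi h₁ h₂ p.2 q.2 r.2 s.1)
    + (-Complex.I) * (acx_bianchi h₁ h₂ p.2 q.2 r.1 s.2)
    + (-Complex.I) * (acx_bianchi h₁ h₂ p.2 q.1 r.2 s.2)
    + (-Complex.I) * (acx_bianchi h₁ h₂ p.1 q.2 r.2 s.2)
    + (1:ℂ) * (acx_bianchi h₁ h₂ p.2 q.2 r.2 s.2)


lemma modelA_isACT (h₁ : IsACT A₁) (h₂ : IsACT A₂) : IsACT (modelA A₁ A₂) := by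
  constructor
  · refine ⟨?_, ?_, ?_, ?_, ?_, ?_, ?_, ?_⟩
    · intro p p' q r s
      simp only [modelA]; rw [acExt_add1 h₁ h₂]; exact Complex.add_re _ _
    · intro c p q r s
      simp only [modelA]; rw [acExt_smul1 h₁ h₂]; simp [Complex.mul_re]
    · intro p q q' r s
      simp only [modelA]; rw [acExt_add2 h₁ h₂]; exact Complex.add_re _ _
    · intro c p q r s
      simp only [modelA]; rw [acExt_smul2 h₁ h₂]; simp [Complex.mul_re]
    · intro p q r r' s
      simp only [modelA]; rw [acExt_add3 h₁ h₂]; exact Complex.add_re _ _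
    · intro c p q r s
      simp only [modelA]; rw [acExt_smul3 h₁ h₂]; simp [Complex.mul_re]
    · intro p q r s s'
      simp only [modelA]; rw [acExt_add4 h₁ h₂]; exact Complex.add_re _ _
    · intro c p q r s
      simp only [modelA]; rw [acExt_smul4 h₁ h₂]; simp [Complex.mul_re]
  · refine ⟨?_, ?_, ?_⟩
    · intro p q r s
      simp only [modelA]; rw [acExt_anti h₁ h₂]; exact Complex.neg_re _
    · intro p q r s
      simp only [modelA]; rw [acExt_pair h₁ h₂]
    · intro p q r s
      simp only [modelA]
      rw [← Complex.add_re, ← Complex.add_re, acExt_bianchi h₁ h₂, Complex.zero_re]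

end AuxACX

theorem statement5
    {V₀ : Type*} [AddCommGroup V₀] [Module ℝ V₀] [FiniteDimensional ℝ V₀]
    (m : ℕ) (hm : Module.finrank ℝ V₀ = m)
    (g : LinearMap.BilinForm ℝ V₀)
    (hgsymm : ∀ x y, g x y = g y x)
    (hgpos : ∀ x : V₀, x ≠ 0 → 0 < g x x)
    (A₁ A₂ : V₀ → V₀ → V₀ → V₀ → ℝ) (hA₁ : IsACT A₁) (hA₂ : IsACT A₂) :
    IsACT (modelA A₁ A₂) ∧
    (∀ p q : V₀ × V₀, modelB g p q = modelB g q p) ∧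
    (∀ p : V₀ × V₀, (∀ q, modelB g p q = 0) → p = 0) ∧
    (∃ b : Module.Basis (Fin m ⊕ Fin m) ℝ (V₀ × V₀),
      (∀ i j, modelB g (b (Sum.inl i)) (b (Sum.inl j)) = if i = j then 1 else 0) ∧
      (∀ i j, modelB g (b (Sum.inr i)) (b (Sum.inr j)) = if i = j then -1 else 0) ∧
      (∀ i j, modelB g (b (Sum.inl i)) (b (Sum.inr j)) = 0)) := by
  refine ⟨modelA_isACT hA₁ hA₂, ?_, ?_, ?_⟩
  · intro p q
    simp only [modelB, hgsymm p.1 q.1, hgsymm p.2 q.2]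
  · intro p hp
    have h1 := hp (p.1, 0)
    have h2 := hp (0, p.2)
    simp only [modelB, map_zero, LinearMap.zero_apply, sub_zero, zero_sub,
      neg_eq_zero] at h1 h2
    have hp1 : p.1 = 0 := by
      by_contra h; exact absurd h1 (ne_of_gt (hgpos _ h))
    have hp2 : p.2 = 0 := by
      by_contra h; exact absurd h2 (ne_of_gt (hgpos _ h))
    exact Prod.ext hp1 hp2
  · haveI : Invertible (2 : ℝ) := invertibleOfNonzero two_ne_zero
    have hsym : g.IsSymm := LinearMap.BilinForm.isSymm_def.2 fun x y => by simpa using hgsymm x y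
    obtain ⟨v, hv⟩ := LinearMap.BilinForm.exists_orthogonal_basis (LinearMap.BilinForm.isSymm_iff.1 hsym)
    have hpos : ∀ i, 0 < g (v i) (v i) := fun i => hgpos _ (v.ne_zero i)
    set c : Fin (Module.finrank ℝ V₀) → ℝ :=
      fun i => (Real.sqrt (g (v i) (v i)))⁻¹ with hc_def
    have hsq : ∀ i, 0 < Real.sqrt (g (v i) (v i)) :=
      fun i => Real.sqrt_pos.2 (hpos i)
    have hc : ∀ i, IsUnit (c i) :=
      fun i => isUnit_iff_ne_zero.2 (inv_ne_zero (ne_of_gt (hsq i)))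
    have hv' : ∀ i j, g (v.isUnitSMul hc i) (v.isUnitSMul hc j) =
        if i = j then 1 else 0 := by
      intro i j
      rw [Module.Basis.isUnitSMul_apply, Module.Basis.isUnitSMul_apply]
      simp only [map_smul, LinearMap.smul_apply, smul_eq_mul]
      by_cases h : i = j
      · subst h
        simp only [if_pos rfl, hc_def]
        have hs := Real.mul_self_sqrt (hpos i).le
        rw [← hs]
        have := (hsq i).ne'
        field_simp
        rw [if_pos trivial, Real.sqrt_sq (hsq i).le, mul_one]
      · rw [hv h]
        simp [h]
    set b₀ : Module.Basis (Fin m) ℝ V₀ := (v.isUnitSMul hc).reindex (finCongr hm) with hb₀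
    have hb₀v : ∀ i j, g (b₀ i) (b₀ j) = if i = j then 1 else 0 := by
      intro i j
      rw [hb₀, Module.Basis.reindex_apply, Module.Basis.reindex_apply, hv']
      by_cases h : i = j
      · subst h; simp
      · rw [if_neg h, if_neg (fun hh => h (by simpa using congrArg (finCongr hm) hh))]
    refine ⟨b₀.prod b₀, ?_, ?_, ?_⟩
    · intro i j
      simp only [modelB, Module.Basis.prod_apply_inl_fst, Module.Basis.prod_apply_inl_snd,
        map_zero, LinearMap.zero_apply, sub_zero, hb₀v]
    · intro i j
      simp only [modelB, Module.Basis.prod_apply_inr_fst, Module.Basis.prod_apply_inr_snd,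
        map_zero, LinearMap.zero_apply, zero_sub, hb₀v]
      split <;> norm_num
    · intro i j
      simp only [modelB, Module.Basis.prod_apply_inl_fst, Module.Basis.prod_apply_inl_snd,
        Module.Basis.prod_apply_inr_fst, Module.Basis.prod_apply_inr_snd,
        map_zero, LinearMap.zero_apply, sub_zero]
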